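/- The n-th derivative of the normalized Gaussian is a Wright function: for every natural number n and real x, (d/dx)ⁿ [e^{-x²/4}/√π] = W(-1/2, (1-n)/2 | x), where the right-hand side is given by the Wright series with 1/Γ vanishing at nonpositive integers. -/

import Mathlib

set_option autoImplicit false
open scoped Nat

noncomputable def wc (n k : ℕ) : ℝ :=
  1 / ((k.factorial : ℝ) * Real.Gamma (-(1 / 2) * k + (1 - n) / 2))

lemma wc_rec (n k : ℕ) : wc (n + 1) k = ((k : ℝ) + 1) * wc n (k + 1) := by
  have harg : (-(1 / 2) * ((k + 1 : ℕ) : ℝ) + (1 - (n : ℝ)) / 2)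
      = (-(1 / 2) * k + (1 - ((n + 1 : ℕ) : ℝ)) / 2) := by push_cast; ring
  unfold wc
  rw [harg]
  set G := Real.Gamma (-(1 / 2) * (k : ℝ) + (1 - ((n + 1 : ℕ) : ℝ)) / 2) with hG
  rcases eq_or_ne G 0 with h | h
  · simp [h]
  · rw [Nat.factorial_succ]
    push_cast
    have h1 : ((k.factorial : ℝ)) ≠ 0 := Nat.cast_ne_zero.mpr k.factorial_ne_zero
    have h2 : ((k : ℝ) + 1) ≠ 0 := by positivity
    field_simp

lemma Gamma_half_sub (m : ℕ) :
    Real.Gamma (1 / 2 - m) = (-4 : ℝ) ^ m * m.factorial * Real.sqrt Real.pi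
      / (2 * m).factorial := by
  induction m with
  | zero => norm_num [Real.Gamma_one_half_eq]
  | succ m ih =>
    have hx : (1 / 2 - ((m : ℝ) + 1)) ≠ 0 := by
      intro h
      have hm : (0:ℝ) ≤ m := Nat.cast_nonneg m
      have : (1 : ℝ) / 2 = (m : ℝ) + 1 := by linarith
      linarith
    have h := Real.Gamma_add_one hx
    have harg : (1 / 2 - ((m : ℝ) + 1)) + 1 = 1 / 2 - m := by ring
    rw [harg] at h
    have h2 : Real.Gamma (1 / 2 - ((m + 1 : ℕ) : ℝ))
        = Real.Gamma (1 / 2 - (m : ℝ)) / (1 / 2 - ((m : ℝ) + 1)) := by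
      rw [show ((m + 1 : ℕ) : ℝ) = (m : ℝ) + 1 by push_cast; ring, h,
        mul_div_cancel_left₀ _ hx]
    have hfac : ((2 * (m + 1)).factorial : ℝ)
        = (2 * m + 2) * ((2 * m + 1) * (2 * m).factorial) := by
      rw [show 2 * (m + 1) = (2 * m + 1) + 1 by ring, Nat.factorial_succ, Nat.factorial_succ]
      push_cast; ring
    have hfac2 : ((m + 1).factorial : ℝ) = ((m : ℝ) + 1) * m.factorial := by
      rw [Nat.factorial_succ]; push_cast; ring
    have h1 : ((2 * m).factorial : ℝ) ≠ 0 := Nat.cast_ne_zero.mpr (2 * m).factorial_ne_zero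
    rw [h2, ih, hfac, hfac2]
    have hm : (0:ℝ) ≤ m := Nat.cast_nonneg m
    have h3 : (2 * (m:ℝ) + 2) ≠ 0 := by linarith
    have h4 : (2 * (m:ℝ) + 1) ≠ 0 := by linarith
    rw [div_div, div_eq_div_iff (mul_ne_zero h1 hx) (by positivity)]
    ring

lemma arg_even {n k m : ℕ} (hm : n + k = 2 * m) :
    (-(1 / 2) * (k : ℝ) + (1 - n) / 2) = 1 / 2 - m := by
  have : (n : ℝ) + k = 2 * m := by exact_mod_cast congrArg (Nat.cast : ℕ → ℝ) hm
  linarith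

lemma wc_odd {n k m : ℕ} (hm : n + k = 2 * m + 1) : wc n k = 0 := by
  have harg : (-(1 / 2) * (k : ℝ) + (1 - n) / 2) = -m := by
    have : (n : ℝ) + k = 2 * m + 1 := by exact_mod_cast congrArg (Nat.cast : ℕ → ℝ) hm
    linarith
  rw [wc, harg, Real.Gamma_neg_nat_eq_zero, mul_zero, div_zero]

lemma sqrtpi_pos : 0 < Real.sqrt Real.pi := Real.sqrt_pos.mpr Real.pi_pos

lemma one_le_sqrtpi : 1 ≤ Real.sqrt Real.pi := by
  rw [show (1:ℝ) = Real.sqrt 1 by simp]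
  exact Real.sqrt_le_sqrt (by linarith [Real.pi_gt_three])

lemma wc_even {n k m : ℕ} (hm : n + k = 2 * m) :
    wc n k = ((2 * m).factorial : ℝ)
      / ((k.factorial : ℝ) * (-4) ^ m * m.factorial * Real.sqrt Real.pi) := by
  rw [wc, arg_even hm, Gamma_half_sub]
  have h1 : ((k.factorial : ℝ)) ≠ 0 := Nat.cast_ne_zero.mpr k.factorial_ne_zero
  have h2 : ((m.factorial : ℝ)) ≠ 0 := Nat.cast_ne_zero.mpr m.factorial_ne_zero
  have h3 : (((2*m).factorial : ℝ)) ≠ 0 := Nat.cast_ne_zero.mpr (2*m).factorial_ne_zero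
  have h4 : ((-4:ℝ)) ^ m ≠ 0 := pow_ne_zero _ (by norm_num)
  have h5 : Real.sqrt Real.pi ≠ 0 := ne_of_gt sqrtpi_pos
  field_simp

lemma wc_abs_le (n k : ℕ) :
    |wc n k| ≤ ((k : ℝ) + n) ^ n / (2 ^ k * (k / 2).factorial) := by
  rcases Nat.even_or_odd (n + k) with he | ho
  · obtain ⟨m, hm⟩ := he
    have hm' : n + k = 2 * m := by omega
    have habs : |wc n k| = ((2 * m).factorial : ℝ)
        / ((k.factorial : ℝ) * 4 ^ m * m.factorial * Real.sqrt Real.pi) := by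
      rw [wc_even hm', abs_div, abs_mul, abs_mul, abs_mul, abs_pow]
      rw [abs_of_nonneg (Real.sqrt_nonneg _), Nat.abs_cast, Nat.abs_cast, Nat.abs_cast]
      norm_num
    rw [habs]
    have hF1 : ((2 * m).factorial : ℝ) ≤ (k.factorial : ℝ) * ((k : ℝ) + n) ^ n := by
      have hnat : (2 * m).factorial ≤ k.factorial * (k + n) ^ n := by
        rw [show 2 * m = k + n by omega, ← Nat.factorial_mul_ascFactorial k n]
        exact Nat.mul_le_mul_left _ (Nat.ascFactorial_le_pow_add k n)
      calc ((2 * m).factorial : ℝ) ≤ ((k.factorial * (k + n) ^ n : ℕ) : ℝ) := by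
            exact_mod_cast hnat
        _ = (k.factorial : ℝ) * ((k : ℝ) + n) ^ n := by push_cast; ring
    have hF2 : (2 : ℝ) ^ k ≤ 4 ^ m := by
      calc (2 : ℝ) ^ k ≤ 2 ^ (2 * m) := by
            apply pow_le_pow_right₀ one_le_two; omega
        _ = 4 ^ m := by rw [pow_mul]; norm_num
    have hF3 : ((k / 2).factorial : ℝ) ≤ (m.factorial : ℝ) := by
      exact_mod_cast Nat.factorial_le (by omega : k / 2 ≤ m)
    calc ((2 * m).factorial : ℝ)
          / ((k.factorial : ℝ) * 4 ^ m * m.factorial * Real.sqrt Real.pi)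
        ≤ ((2 * m).factorial : ℝ) / ((k.factorial : ℝ) * 4 ^ m * m.factorial * 1) := by
          gcongr
          exact one_le_sqrtpi
      _ = ((2 * m).factorial : ℝ) / ((k.factorial : ℝ) * (4 ^ m * m.factorial)) := by
          rw [mul_one]; ring_nf
      _ ≤ ((k.factorial : ℝ) * ((k : ℝ) + n) ^ n)
            / ((k.factorial : ℝ) * (2 ^ k * (k / 2).factorial)) := by
          gcongr
      _ = ((k : ℝ) + n) ^ n / (2 ^ k * (k / 2).factorial) := by
          rw [mul_div_mul_left]
          exact Nat.cast_ne_zero.mpr k.factorial_ne_zero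
  · obtain ⟨m, hm⟩ := ho
    rw [wc_odd hm, abs_zero]
    positivity

lemma pow_le_factorial_mul_exp (j : ℕ) {y : ℝ} (hy : 0 ≤ y) :
    y ^ j ≤ (j.factorial : ℝ) * Real.exp y := by
  have h1 : y ^ j / (j.factorial : ℝ) ≤ Real.exp y := by
    refine le_trans ?_ (Real.sum_le_exp_of_nonneg hy (j + 1))
    exact Finset.single_le_sum (f := fun i => y ^ i / (i.factorial : ℝ))
      (fun i _ => by positivity) (Finset.self_mem_range_succ j)
  have hj : (0:ℝ) < (j.factorial : ℝ) := by positivity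
  calc y ^ j = y ^ j / (j.factorial : ℝ) * j.factorial := by field_simp
    _ ≤ Real.exp y * j.factorial := by gcongr
    _ = (j.factorial : ℝ) * Real.exp y := mul_comm _ _

lemma wc_master (n k : ℕ) {R : ℝ} (hR : 1 ≤ R) :
    ((k : ℝ) + 1) * |wc n k| * R ^ k
      ≤ (((n + 1).factorial : ℝ) * Real.exp ((n : ℝ) + 1))
        * (Real.exp 1 * R / 2) ^ k / (k / 2).factorial := by
  have h0R : (0:ℝ) < R := lt_of_lt_of_le one_pos hR
  have hpow : ((k : ℝ) + 1) * ((k : ℝ) + n) ^ n ≤ ((k : ℝ) + n + 1) ^ (n + 1) := by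
    rw [pow_succ]
    have h1 : ((k : ℝ) + 1) ≤ ((k : ℝ) + n + 1) := by
      have : (0:ℝ) ≤ n := Nat.cast_nonneg n
      linarith
    have h2 : ((k : ℝ) + n) ^ n ≤ ((k : ℝ) + n + 1) ^ n :=
      pow_le_pow_left₀ (by positivity) (by linarith) n
    calc ((k : ℝ) + 1) * ((k : ℝ) + n) ^ n ≤ ((k : ℝ) + n + 1) * ((k : ℝ) + n + 1) ^ n := by
          apply mul_le_mul h1 h2 (by positivity) (by positivity)
      _ = ((k : ℝ) + n + 1) ^ n * ((k : ℝ) + n + 1) := mul_comm _ _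
  have hexp : ((k : ℝ) + n + 1) ^ (n + 1)
      ≤ ((n + 1).factorial : ℝ) * (Real.exp ((n : ℝ) + 1) * Real.exp 1 ^ k) := by
    have h := pow_le_factorial_mul_exp (n + 1) (y := (k : ℝ) + n + 1) (by positivity)
    have he : Real.exp ((k : ℝ) + n + 1) = Real.exp ((n : ℝ) + 1) * Real.exp 1 ^ k := by
      rw [show ((k : ℝ) + n + 1) = ((n : ℝ) + 1) + (k : ℝ) * 1 by ring, Real.exp_add,
        Real.exp_nat_mul]
    rw [he] at h
    exact h
  calc ((k : ℝ) + 1) * |wc n k| * R ^ k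
      ≤ ((k : ℝ) + 1) * (((k : ℝ) + n) ^ n / (2 ^ k * (k / 2).factorial)) * R ^ k := by
        gcongr
        exact wc_abs_le n k
    _ = ((k : ℝ) + 1) * ((k : ℝ) + n) ^ n * R ^ k / (2 ^ k * (k / 2).factorial) := by ring
    _ ≤ ((k : ℝ) + n + 1) ^ (n + 1) * R ^ k / (2 ^ k * (k / 2).factorial) := by
        gcongr
    _ ≤ ((n + 1).factorial : ℝ) * (Real.exp ((n : ℝ) + 1) * Real.exp 1 ^ k) * R ^ k
          / (2 ^ k * (k / 2).factorial) := by gcongr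
    _ = (((n + 1).factorial : ℝ) * Real.exp ((n : ℝ) + 1))
          * (Real.exp 1 * R / 2) ^ k / (k / 2).factorial := by
        rw [div_pow, mul_pow]
        ring

lemma summable_u (D A : ℝ) : Summable (fun k : ℕ => D * A ^ k / ((k / 2).factorial : ℝ)) := by
  have he : Summable (fun m : ℕ => D * A ^ (2 * m) / (((2 * m) / 2).factorial : ℝ)) := by
    refine ((Real.summable_pow_div_factorial (A ^ 2)).mul_left D).congr fun m => ?_
    rw [show (2 * m) / 2 = m by omega, pow_mul, mul_div_assoc]
  have ho : Summable (fun m : ℕ => D * A ^ (2 * m + 1) / (((2 * m + 1) / 2).factorial : ℝ)) := by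
    refine (((Real.summable_pow_div_factorial (A ^ 2)).mul_left (D * A))).congr fun m => ?_
    rw [show (2 * m + 1) / 2 = m by omega, ← pow_mul, pow_succ]
    ring
  exact (HasSum.even_add_odd (f := fun k : ℕ => D * A ^ k / ((k / 2).factorial : ℝ))
    he.hasSum ho.hasSum).summable

lemma real_exp_eq_tsum (y : ℝ) : Real.exp y = ∑' n : ℕ, y ^ n / (n.factorial : ℝ) := by
  rw [Real.exp_eq_exp_ℝ, NormedSpace.exp_eq_tsum_div]

lemma wc_zero_even (m : ℕ) :
    wc 0 (2 * m) = ((-4 : ℝ) ^ m * (m.factorial : ℝ) * Real.sqrt Real.pi)⁻¹ := by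
  rw [wc_even (n := 0) (k := 2 * m) (m := m) (by omega)]
  have h1 : ((-4:ℝ)) ^ m ≠ 0 := pow_ne_zero _ (by norm_num)
  have h2 : ((m.factorial : ℝ)) ≠ 0 := Nat.cast_ne_zero.mpr m.factorial_ne_zero
  have h3 : (((2*m).factorial : ℝ)) ≠ 0 := Nat.cast_ne_zero.mpr (2*m).factorial_ne_zero
  have h5 : Real.sqrt Real.pi ≠ 0 := ne_of_gt sqrtpi_pos
  field_simp

lemma base_case (x : ℝ) :
    Real.exp (-x ^ 2 / 4) / Real.sqrt Real.pi = ∑' k : ℕ, wc 0 k * x ^ k := by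
  have hterm : ∀ m : ℕ, (1 / Real.sqrt Real.pi) * ((-x ^ 2 / 4) ^ m / (m.factorial : ℝ))
      = wc 0 (2 * m) * x ^ (2 * m) := by
    intro m
    rw [wc_zero_even]
    have h4 : ((-x ^ 2 / 4 : ℝ)) ^ m = (x ^ 2) ^ m * ((-4 : ℝ) ^ m)⁻¹ := by
      rw [← inv_pow, ← mul_pow]
      congr 1
      ring
    rw [h4, ← pow_mul]
    have h1 : ((-4:ℝ)) ^ m ≠ 0 := pow_ne_zero _ (by norm_num)
    have h2 : ((m.factorial : ℝ)) ≠ 0 := Nat.cast_ne_zero.mpr m.factorial_ne_zero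
    have h5 : Real.sqrt Real.pi ≠ 0 := ne_of_gt sqrtpi_pos
    field_simp
  have he : Summable (fun m : ℕ => wc 0 (2 * m) * x ^ (2 * m)) :=
    (((Real.summable_pow_div_factorial (-x ^ 2 / 4)).mul_left
      (1 / Real.sqrt Real.pi))).congr fun m => hterm m
  have hodd0 : ∀ m : ℕ, wc 0 (2 * m + 1) * x ^ (2 * m + 1) = 0 := fun m => by
    rw [wc_odd (n := 0) (m := m) (by omega), zero_mul]
  have ho : Summable (fun m : ℕ => wc 0 (2 * m + 1) * x ^ (2 * m + 1)) :=
    summable_zero.congr fun m => (hodd0 m).symm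
  calc Real.exp (-x ^ 2 / 4) / Real.sqrt Real.pi
      = (1 / Real.sqrt Real.pi) * ∑' m : ℕ, (-x ^ 2 / 4) ^ m / (m.factorial : ℝ) := by
        rw [← real_exp_eq_tsum]; ring
    _ = ∑' m : ℕ, wc 0 (2 * m) * x ^ (2 * m) := by
        rw [← tsum_mul_left]; exact tsum_congr fun m => hterm m
    _ = (∑' m : ℕ, wc 0 (2 * m) * x ^ (2 * m))
          + ∑' m : ℕ, wc 0 (2 * m + 1) * x ^ (2 * m + 1) := by
        rw [tsum_congr hodd0, tsum_zero, add_zero]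
    _ = ∑' k : ℕ, wc 0 k * x ^ k :=
        tsum_even_add_odd (f := fun k : ℕ => wc 0 k * x ^ k) he ho

theorem gaussian_key (n : ℕ) : ∀ x : ℝ,
    iteratedDeriv n (fun t : ℝ => Real.exp (-t ^ 2 / 4) / Real.sqrt Real.pi) x
      = ∑' k : ℕ, wc n k * x ^ k := by
  induction n with
  | zero => intro x; rw [iteratedDeriv_zero]; exact base_case x
  | succ n ih =>
    intro x
    rw [iteratedDeriv_succ, funext ih]
    set R : ℝ := |x| + 1 with hRdef
    have hR1 : 1 ≤ R := le_add_of_nonneg_left (abs_nonneg x)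
    have hxR : |x| < R := by rw [hRdef]; linarith
    set D : ℝ := ((n + 1).factorial : ℝ) * Real.exp ((n : ℝ) + 1) with hDdef
    set A : ℝ := Real.exp 1 * R / 2 with hAdef
    have hu : Summable (fun k : ℕ => D * A ^ k / ((k / 2).factorial : ℝ)) := summable_u D A
    have hbound : ∀ (k : ℕ) (y : ℝ), |y| ≤ R →
        ‖wc n k * ((k : ℝ) * y ^ (k - 1))‖ ≤ D * A ^ k / ((k / 2).factorial : ℝ) := by
      intro k y hy
      simp only [norm_mul, norm_pow, Real.norm_eq_abs, Nat.abs_cast]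
      have e1 : |y| ^ (k - 1) ≤ R ^ k :=
        le_trans (pow_le_pow_left₀ (abs_nonneg y) hy _)
          (pow_le_pow_right₀ hR1 (Nat.sub_le k 1))
      have e2 : (k : ℝ) * |y| ^ (k - 1) ≤ ((k : ℝ) + 1) * R ^ k :=
        mul_le_mul (by linarith) e1 (by positivity) (by positivity)
      calc |wc n k| * ((k : ℝ) * |y| ^ (k - 1))
          ≤ |wc n k| * (((k : ℝ) + 1) * R ^ k) :=
            mul_le_mul_of_nonneg_left e2 (abs_nonneg _)
        _ = ((k : ℝ) + 1) * |wc n k| * R ^ k := by ring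
        _ ≤ D * A ^ k / ((k / 2).factorial : ℝ) := wc_master n k hR1
    have hmem : x ∈ Metric.ball (0 : ℝ) R := by
      rw [Metric.mem_ball, Real.dist_eq, sub_zero]; exact hxR
    have hg : ∀ (k : ℕ) (y : ℝ), y ∈ Metric.ball (0 : ℝ) R →
        HasDerivAt (fun z : ℝ => wc n k * z ^ k) (wc n k * ((k : ℝ) * y ^ (k - 1))) y :=
      fun k y _ => (hasDerivAt_pow k y).const_mul (wc n k)
    have hg' : ∀ (k : ℕ) (y : ℝ), y ∈ Metric.ball (0 : ℝ) R →
        ‖wc n k * ((k : ℝ) * y ^ (k - 1))‖ ≤ D * A ^ k / ((k / 2).factorial : ℝ) := by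
      intro k y hyy
      have := Metric.mem_ball.mp hyy
      rw [Real.dist_eq, sub_zero] at this
      exact hbound k y this.le
    have hg0 : Summable fun k : ℕ => wc n k * x ^ k := by
      refine Summable.of_norm_bounded hu fun k => ?_
      rw [norm_mul, norm_pow, Real.norm_eq_abs, Real.norm_eq_abs]
      calc |wc n k| * |x| ^ k
          ≤ |wc n k| * R ^ k :=
            mul_le_mul_of_nonneg_left (pow_le_pow_left₀ (abs_nonneg x) hxR.le k) (abs_nonneg _)
        _ ≤ ((k : ℝ) + 1) * (|wc n k| * R ^ k) :=
            le_mul_of_one_le_left (by positivity)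
              (by have : (0:ℝ) ≤ (k:ℝ) := Nat.cast_nonneg k; linarith)
        _ = ((k : ℝ) + 1) * |wc n k| * R ^ k := by ring
        _ ≤ D * A ^ k / ((k / 2).factorial : ℝ) := wc_master n k hR1
    have hkey := hasDerivAt_tsum_of_isPreconnected hu Metric.isOpen_ball
      (convex_ball (0 : ℝ) R).isPreconnected hg hg' hmem hg0 hmem
    rw [HasDerivAt.deriv hkey]
    have hsum' : Summable fun k : ℕ => wc n k * ((k : ℝ) * x ^ (k - 1)) :=
      Summable.of_norm_bounded hu fun k => hbound k x hxR.le
    rw [Summable.tsum_eq_zero_add hsum']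
    rw [show wc n 0 * (((0 : ℕ) : ℝ) * x ^ (0 - 1)) = 0 by norm_num, zero_add]
    refine tsum_congr fun k => ?_
    rw [Nat.add_sub_cancel, wc_rec n k]
    push_cast
    ring

/-- The `n`-th derivative of the normalized Gaussian is a Wright function:
`(d/dx)ⁿ [e^{-x²/4}/√π] = W(-1/2, (1-n)/2 | x)` for every `n : ℕ` and real `x`.
(Mathlib's `Real.Gamma` vanishes at the nonpositive integers, so division by it
implements the convention that such terms of the Wright series vanish.) -/
theorem gaussian_deriv_eq_wright (n : ℕ) (x : ℝ) :
    iteratedDeriv n (fun t : ℝ => Real.exp (-t ^ 2 / 4) / Real.sqrt Real.pi) x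
      = ∑' k : ℕ, x ^ k /
          ((k.factorial : ℝ) * Real.Gamma (-(1 / 2) * k + (1 - n) / 2)) := by
  rw [gaussian_key n x]
  refine tsum_congr fun k => ?_
  rw [show wc n k = 1 / ((k.factorial : ℝ) * Real.Gamma (-(1 / 2) * k + (1 - n) / 2)) from rfl,
    one_div_mul_eq_div]
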